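/- Define h : [0,∞) → ℝ by h(x) = coth(x) − 1/x for x > 0 and h(0) = 0. Then h is continuous at 0, h is strictly increasing on [0,∞), h is concave on (0,∞), and the right derivative of h at 0 equals 1/3. -/

import Mathlib

open Real Set Filter
open scoped Topology

/-- `h(x) = coth x − 1/x` for `x > 0`, with `h(0) = 0`. -/
noncomputable def hfun (x : ℝ) : ℝ :=
  if x = 0 then 0 else Real.cosh x / Real.sinh x - 1 / x

namespace HfunAux

lemma self_le_sinh {x : ℝ} (hx : 0 ≤ x) : x ≤ Real.sinh x := by
  rcases eq_or_lt_of_le hx with h | h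
  · simp [← h]
  · exact (Real.self_lt_sinh_iff.2 h).le

lemma sinh_nonneg' {x : ℝ} (hx : 0 ≤ x) : 0 ≤ Real.sinh x :=
  le_trans hx (self_le_sinh hx)

lemma nonneg_of_hasDerivAt {f f' : ℝ → ℝ} (hder : ∀ y, HasDerivAt f (f' y) y)
    (h0 : f 0 = 0) (hpos : ∀ y, 0 ≤ y → 0 ≤ f' y) {x : ℝ} (hx : 0 ≤ x) : 0 ≤ f x := by
  have hmono : MonotoneOn f (Set.Ici 0) := by
    apply monotoneOn_of_deriv_nonneg (convex_Ici 0)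
    · exact fun y _ => (hder y).differentiableAt.continuousAt.continuousWithinAt
    · exact fun y _ => (hder y).differentiableAt.differentiableWithinAt
    · intro y hy
      rw [interior_Ici] at hy
      rw [(hder y).deriv]
      exact hpos y hy.le
  calc (0:ℝ) = f 0 := h0.symm
  _ ≤ f x := hmono self_mem_Ici hx hx

lemma sinh_le_mul_cosh {x : ℝ} (hx : 0 ≤ x) : Real.sinh x ≤ x * Real.cosh x := by
  have h := nonneg_of_hasDerivAt (f := fun y => y * Real.cosh y - Real.sinh y)
      (f' := fun y => y * Real.sinh y) ?_ (by simp) ?_ hx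
  · linarith
  · intro y
    have h := ((hasDerivAt_id y).mul (Real.hasDerivAt_cosh y)).sub (Real.hasDerivAt_sinh y)
    refine h.congr_deriv ?_
    simp only [id_eq]; ring
  · intro y hy
    exact mul_nonneg hy (sinh_nonneg' hy)

/-- lower bound: `x³/3 ≤ x cosh x − sinh x`. -/
lemma lowerA {x : ℝ} (hx : 0 ≤ x) : x ^ 3 / 3 ≤ x * Real.cosh x - Real.sinh x := by
  have h := nonneg_of_hasDerivAt
      (f := fun y => y * Real.cosh y - Real.sinh y - y ^ 3 / 3)
      (f' := fun y => y * Real.sinh y - y ^ 2) ?_ (by simp) ?_ hx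
  · linarith
  · intro y
    have h := (((hasDerivAt_id y).mul (Real.hasDerivAt_cosh y)).sub
      (Real.hasDerivAt_sinh y)).sub ((hasDerivAt_pow 3 y).div_const 3)
    refine h.congr_deriv ?_
    simp only [id_eq]; push_cast; ring
  · intro y hy
    have := self_le_sinh hy
    nlinarith

/-- upper bound: `x cosh x − sinh x ≤ (x³/3) cosh x`. -/
lemma upperB {x : ℝ} (hx : 0 ≤ x) :
    x * Real.cosh x - Real.sinh x ≤ x ^ 3 / 3 * Real.cosh x := by
  have h := nonneg_of_hasDerivAt
      (f := fun y => y ^ 3 / 3 * Real.cosh y - (y * Real.cosh y - Real.sinh y))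
      (f' := fun y => y ^ 2 * Real.cosh y + y ^ 3 / 3 * Real.sinh y - y * Real.sinh y) ?_
      (by simp) ?_ hx
  · linarith
  · intro y
    have h := (((hasDerivAt_pow 3 y).div_const 3).mul (Real.hasDerivAt_cosh y)).sub
      (((hasDerivAt_id y).mul (Real.hasDerivAt_cosh y)).sub (Real.hasDerivAt_sinh y))
    refine h.congr_deriv ?_
    simp only [id_eq]; push_cast; ring
  · intro y hy
    have h1 := sinh_le_mul_cosh hy
    have h2 := sinh_nonneg' hy
    nlinarith [mul_nonneg hy (sub_nonneg.2 h1), mul_nonneg (pow_nonneg hy 3) h2]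

lemma N_nonneg {x : ℝ} (hx : 0 ≤ x) :
    0 ≤ 3 * x * Real.cosh x ^ 2 - 3 * Real.sinh x * Real.cosh x - x * Real.sinh x ^ 2 := by
  have h := nonneg_of_hasDerivAt
      (f := fun y => 3 * y * Real.cosh y ^ 2 - 3 * Real.sinh y * Real.cosh y
        - y * Real.sinh y ^ 2)
      (f' := fun y => 4 * Real.sinh y * (y * Real.cosh y - Real.sinh y)) ?_ (by simp) ?_ hx
  · simpa using h
  · intro y
    have h := ((((hasDerivAt_id y).const_mul 3).mul ((Real.hasDerivAt_cosh y).pow 2)).sub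
      (((Real.hasDerivAt_sinh y).const_mul 3).mul (Real.hasDerivAt_cosh y))).sub
      ((hasDerivAt_id y).mul ((Real.hasDerivAt_sinh y).pow 2))
    refine h.congr_deriv ?_
    have hc := Real.cosh_sq_sub_sinh_sq y
    simp only [id_eq, Pi.pow_apply]; push_cast; nlinarith [hc]
  · intro y hy
    have h1 := sinh_le_mul_cosh hy
    have h2 := sinh_nonneg' hy
    nlinarith

/-- key inequality: `x³ cosh x ≤ sinh³ x` for `x > 0`. -/
lemma key {x : ℝ} (hx : 0 < x) : x ^ 3 * Real.cosh x ≤ Real.sinh x ^ 3 := by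
  set r : ℝ → ℝ := fun y => Real.sinh y ^ 3 / (y ^ 3 * Real.cosh y) with hr_def
  have hden : ∀ y : ℝ, 0 < y → 0 < y ^ 3 * Real.cosh y := fun y hy =>
    mul_pos (pow_pos hy 3) (Real.cosh_pos y)
  have hder : ∀ y : ℝ, 0 < y → HasDerivAt r
      ((Real.sinh y ^ 2 * y ^ 2 *
        (3 * y * Real.cosh y ^ 2 - 3 * Real.sinh y * Real.cosh y - y * Real.sinh y ^ 2))
        / (y ^ 3 * Real.cosh y) ^ 2) y := by
    intro y hy
    have h := ((Real.hasDerivAt_sinh y).pow 3).div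
      ((hasDerivAt_pow 3 y).mul (Real.hasDerivAt_cosh y)) (hden y hy).ne'
    refine h.congr_deriv ?_
    simp only [Pi.mul_apply, Pi.pow_apply]
    push_cast
    rw [div_eq_div_iff (by positivity) (by positivity)]
    ring
  have hmono : MonotoneOn r (Set.Ioi 0) := by
    apply monotoneOn_of_deriv_nonneg (convex_Ioi 0)
    · exact fun y hy => (hder y hy).differentiableAt.continuousAt.continuousWithinAt
    · rw [interior_Ioi]
      exact fun y hy => (hder y hy).differentiableAt.differentiableWithinAt
    · rw [interior_Ioi]
      intro y hy
      rw [(hder y hy).deriv]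
      apply div_nonneg _ (sq_nonneg _)
      have := N_nonneg (le_of_lt hy)
      positivity
  have hlim : Tendsto r (𝓝[>] (0:ℝ)) (𝓝 1) := by
    have hlow : Tendsto (fun y : ℝ => (Real.cosh y)⁻¹) (𝓝[>] (0:ℝ)) (𝓝 1) := by
      have : ContinuousAt (fun y : ℝ => (Real.cosh y)⁻¹) 0 :=
        Real.continuous_cosh.continuousAt.inv₀ (by simp)
      simpa using this.continuousWithinAt.tendsto
    have hup : Tendsto (fun y : ℝ => Real.cosh y ^ 2) (𝓝[>] (0:ℝ)) (𝓝 1) := by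
      have : ContinuousAt (fun y : ℝ => Real.cosh y ^ 2) 0 :=
        (Real.continuous_cosh.continuousAt).pow 2
      simpa using this.continuousWithinAt.tendsto
    apply tendsto_of_tendsto_of_tendsto_of_le_of_le' hlow hup
    · filter_upwards [self_mem_nhdsWithin] with y hy
      have hy : (0:ℝ) < y := hy
      rw [hr_def]
      have h1 : y ^ 3 ≤ Real.sinh y ^ 3 := pow_le_pow_left₀ hy.le (self_le_sinh hy.le) 3
      rw [inv_eq_one_div, div_le_div_iff₀ (Real.cosh_pos y) (hden y hy)]
      nlinarith [Real.cosh_pos y]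
    · filter_upwards [self_mem_nhdsWithin] with y hy
      have hy : (0:ℝ) < y := hy
      rw [hr_def]
      have h1 : Real.sinh y ^ 3 ≤ (y * Real.cosh y) ^ 3 := by
        apply pow_le_pow_left₀ (sinh_nonneg' hy.le) (sinh_le_mul_cosh hy.le)
      rw [div_le_iff₀ (hden y hy)]
      nlinarith [Real.cosh_pos y]
  have hone : 1 ≤ r x := by
    apply le_of_tendsto hlim
    filter_upwards [Ioc_mem_nhdsGT_of_mem ⟨le_refl 0, hx⟩] with y hy
    exact hmono hy.1 hx hy.2
  rw [hr_def] at hone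
  simp only at hone
  rw [le_div_iff₀ (hden x hx)] at hone
  linarith

lemma hfun_zero : hfun 0 = 0 := if_pos rfl

lemma hfun_eq_frac {x : ℝ} (hx : 0 < x) :
    hfun x = (x * Real.cosh x - Real.sinh x) / (x * Real.sinh x) := by
  have hs := Real.sinh_pos_iff.2 hx
  rw [hfun, if_neg hx.ne']
  field_simp

lemma hfun_bounds {x : ℝ} (hx : 0 ≤ x) :
    x / (3 * Real.cosh x) ≤ hfun x ∧ hfun x ≤ x * Real.cosh x / 3 := by
  rcases eq_or_lt_of_le hx with h | h
  · subst h; simp [hfun_zero]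
  · have hs := Real.sinh_pos_iff.2 h
    have hc := Real.cosh_pos x
    have hden : 0 < x * Real.sinh x := mul_pos h hs
    rw [hfun_eq_frac h]
    constructor
    · rw [div_le_div_iff₀ (by positivity) hden]
      have hA := lowerA hx
      have hB := sinh_le_mul_cosh hx
      nlinarith [mul_le_mul_of_nonneg_right hA hc.le,
        mul_le_mul_of_nonneg_right hB (mul_nonneg hx hx)]
    · rw [div_le_div_iff₀ hden (by norm_num : (0:ℝ) < 3)]
      have hA := upperB hx
      have hB := self_le_sinh hx
      nlinarith [mul_le_mul_of_nonneg_right hB (mul_nonneg (mul_nonneg hx hx) hc.le)]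

lemma tendsto_low : Tendsto (fun y : ℝ => y / (3 * Real.cosh y)) (𝓝 (0:ℝ)) (𝓝 0) := by
  have : ContinuousAt (fun y : ℝ => y / (3 * Real.cosh y)) 0 := by
    apply ContinuousAt.div continuousAt_id
    · exact (continuousAt_const.mul Real.continuous_cosh.continuousAt)
    · simp [Real.cosh_zero]
  simpa using this.tendsto

lemma tendsto_up : Tendsto (fun y : ℝ => y * Real.cosh y / 3) (𝓝 (0:ℝ)) (𝓝 0) := by
  have : ContinuousAt (fun y : ℝ => y * Real.cosh y / 3) 0 :=
    (continuousAt_id.mul Real.continuous_cosh.continuousAt).div_const 3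
  simpa using this.tendsto

lemma hfun_cont : ContinuousWithinAt hfun (Set.Ici 0) 0 := by
  rw [ContinuousWithinAt, hfun_zero]
  apply tendsto_of_tendsto_of_tendsto_of_le_of_le'
    (tendsto_low.mono_left nhdsWithin_le_nhds)
    (tendsto_up.mono_left nhdsWithin_le_nhds)
  · filter_upwards [self_mem_nhdsWithin] with y hy
    exact (hfun_bounds hy).1
  · filter_upwards [self_mem_nhdsWithin] with y hy
    exact (hfun_bounds hy).2

lemma hfun_hasDerivAt {x : ℝ} (hx : 0 < x) :
    HasDerivAt hfun ((x ^ 2)⁻¹ - (Real.sinh x ^ 2)⁻¹) x := by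
  have hs := Real.sinh_pos_iff.2 hx
  have hev : hfun =ᶠ[𝓝 x] fun y => Real.cosh y / Real.sinh y - 1 / y := by
    filter_upwards [isOpen_Ioi.mem_nhds hx] with y hy
    rw [hfun, if_neg (ne_of_gt hy)]
  have hinv : HasDerivAt (fun y : ℝ => 1 / y) (-(x ^ 2)⁻¹) x := by
    simpa [one_div] using hasDerivAt_inv hx.ne'
  have h1 : HasDerivAt (fun y => Real.cosh y / Real.sinh y - 1 / y)
      ((x ^ 2)⁻¹ - (Real.sinh x ^ 2)⁻¹) x := by
    have h := ((Real.hasDerivAt_cosh x).div (Real.hasDerivAt_sinh x) hs.ne').sub hinv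
    refine h.congr_deriv ?_
    have hid := Real.cosh_sq_sub_sinh_sq x
    rw [show Real.sinh x * Real.sinh x - Real.cosh x * Real.cosh x = -1 by nlinarith [hid]]
    field_simp
    ring
  exact h1.congr_of_eventuallyEq hev

lemma hfun_contOn : ContinuousOn hfun (Set.Ici 0) := by
  intro x hx
  rcases eq_or_lt_of_le (show (0:ℝ) ≤ x from hx) with h | h
  · subst h; exact hfun_cont
  · exact (hfun_hasDerivAt h).differentiableAt.continuousAt.continuousWithinAt

lemma hfun_strictMono : StrictMonoOn hfun (Set.Ici 0) := by
  apply strictMonoOn_of_deriv_pos (convex_Ici 0) hfun_contOn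
  rw [interior_Ici]
  intro x hx
  have hx' : (0:ℝ) < x := hx
  rw [(hfun_hasDerivAt hx').deriv]
  have hs := Real.self_lt_sinh_iff.2 hx'
  have h2 : x ^ 2 < Real.sinh x ^ 2 := by nlinarith
  have hx2 : (0:ℝ) < x ^ 2 := by positivity
  have := inv_strictAnti₀ hx2 h2
  linarith

lemma hfun_deriv2 {x : ℝ} (hx : 0 < x) :
    HasDerivAt (fun y : ℝ => (y ^ 2)⁻¹ - (Real.sinh y ^ 2)⁻¹)
      (2 * Real.cosh x / Real.sinh x ^ 3 - 2 / x ^ 3) x := by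
  have hs := Real.sinh_pos_iff.2 hx
  have h1 : HasDerivAt (fun y : ℝ => (y ^ 2)⁻¹)
      (-(2 * x) / (x ^ 2) ^ 2) x := by
    have := (hasDerivAt_pow 2 x).inv (by positivity)
    refine this.congr_deriv ?_
    push_cast; ring
  have h2 : HasDerivAt (fun y : ℝ => (Real.sinh y ^ 2)⁻¹)
      (-(2 * Real.sinh x * Real.cosh x) / (Real.sinh x ^ 2) ^ 2) x := by
    have := ((Real.hasDerivAt_sinh x).pow 2).inv (pow_ne_zero 2 hs.ne')
    refine this.congr_deriv ?_
    simp only [Pi.pow_apply]; push_cast; ring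
  have h := h1.sub h2
  refine h.congr_deriv ?_
  field_simp
  ring

lemma hfun_concave : ConcaveOn ℝ (Set.Ioi 0) hfun := by
  apply concaveOn_of_hasDerivWithinAt2_nonpos (convex_Ioi 0)
    (f' := fun y : ℝ => (y ^ 2)⁻¹ - (Real.sinh y ^ 2)⁻¹)
    (f'' := fun y : ℝ => 2 * Real.cosh y / Real.sinh y ^ 3 - 2 / y ^ 3)
  · exact hfun_contOn.mono Set.Ioi_subset_Ici_self
  · rw [interior_Ioi]
    exact fun x hx => (hfun_hasDerivAt hx).hasDerivWithinAt
  · rw [interior_Ioi]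
    exact fun x hx => (hfun_deriv2 hx).hasDerivWithinAt
  · rw [interior_Ioi]
    intro x hx
    have hx' : (0:ℝ) < x := hx
    have hs := Real.sinh_pos_iff.2 hx'
    have hk := key hx'
    simp only [sub_nonpos]
    rw [div_le_div_iff₀ (by positivity) (by positivity)]
    nlinarith
  
lemma hfun_deriv0 : HasDerivWithinAt hfun (1 / 3) (Set.Ioi 0) 0 := by
  rw [hasDerivWithinAt_iff_tendsto_slope]
  rw [Set.diff_singleton_eq_self (by simp)]
  have hlow : Tendsto (fun y : ℝ => 1 / (3 * Real.cosh y)) (𝓝[>] (0:ℝ)) (𝓝 (1/3)) := by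
    have : ContinuousAt (fun y : ℝ => 1 / (3 * Real.cosh y)) 0 := by
      apply ContinuousAt.div continuousAt_const
      · exact (continuousAt_const.mul Real.continuous_cosh.continuousAt)
      · simp [Real.cosh_zero]
    have ht := this.tendsto
    simp only [Real.cosh_zero, mul_one] at ht
    exact ht.mono_left nhdsWithin_le_nhds
  have hup : Tendsto (fun y : ℝ => Real.cosh y / 3) (𝓝[>] (0:ℝ)) (𝓝 (1/3)) := by
    have : ContinuousAt (fun y : ℝ => Real.cosh y / 3) 0 :=
      Real.continuous_cosh.continuousAt.div_const 3
    have ht := this.tendsto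
    simp only [Real.cosh_zero] at ht
    exact ht.mono_left nhdsWithin_le_nhds
  apply tendsto_of_tendsto_of_tendsto_of_le_of_le' hlow hup
  · filter_upwards [self_mem_nhdsWithin] with y hy
    have hy : (0:ℝ) < y := hy
    have hb := (hfun_bounds hy.le).1
    rw [slope_def_field, hfun_zero, sub_zero, sub_zero]
    rw [div_le_div_iff₀ (by positivity) hy]
    rw [div_le_iff₀ (by positivity)] at hb
    -- hb : y ≤ hfun y * (3 * cosh y)
    nlinarith
  · filter_upwards [self_mem_nhdsWithin] with y hy
    have hy : (0:ℝ) < y := hy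
    have hb := (hfun_bounds hy.le).2
    rw [slope_def_field, hfun_zero, sub_zero, sub_zero]
    rw [div_le_div_iff₀ hy (by norm_num : (0:ℝ) < 3)]
    nlinarith

end HfunAux

/-- `h` is continuous at `0` (from the right), strictly increasing on `[0,∞)`,
concave on `(0,∞)`, and its right derivative at `0` is `1/3`. -/
theorem hfun_properties :
    ContinuousWithinAt hfun (Set.Ici 0) 0 ∧
    StrictMonoOn hfun (Set.Ici 0) ∧
    ConcaveOn ℝ (Set.Ioi 0) hfun ∧
    HasDerivWithinAt hfun (1 / 3) (Set.Ioi 0) 0 :=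
  ⟨HfunAux.hfun_cont, HfunAux.hfun_strictMono, HfunAux.hfun_concave, HfunAux.hfun_deriv0⟩
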